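/- Let k be a field, S a finite-dimensional split k-algebra, R a subalgebra of S, and M a finite-dimensional left S-module affording the representation ρ: S → End_k(M). Then C(S,R) = C₀(S,R;M) if and only if the following holds: for every s ∈ S, if ρ(s) lies in [R, End_k(M)] (the span of all ρ(r)φ − φρ(r), r ∈ R, φ ∈ End_k(M)), then s ∈ [R,S]. -/
import Mathlib

section AuxTrace

set_option linter.unusedSectionVars false

open LinearMap TensorProduct

variable (k : Type) [Field k] (M : Type) [AddCommGroup M] [Module k M] [FiniteDimensional k M]

/-- The trace pairing `θ ↦ (φ ↦ trace (θ * φ))` on `End_k(M)`. -/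
noncomputable def tForm : (M →ₗ[k] M) →ₗ[k] Module.Dual k (M →ₗ[k] M) :=
  (LinearMap.mul k (Module.End k M)).compr₂ (LinearMap.trace k M)

lemma tForm_apply (θ φ : M →ₗ[k] M) : tForm k M θ φ = LinearMap.trace k M (θ * φ) := rfl

lemma tForm_bijective : Function.Bijective (tForm k M) := by
  have hinj : Function.Injective (tForm k M) := by
    rw [← LinearMap.ker_eq_bot, LinearMap.ker_eq_bot']
    intro θ hθ
    ext v
    rw [LinearMap.zero_apply, ← Module.forall_dual_apply_eq_zero_iff k]
    intro f
    have h1 : tForm k M θ (dualTensorHom k M M (f ⊗ₜ[k] v)) = 0 := by rw [hθ]; rfl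
    rw [tForm_apply] at h1
    have h2 : θ * dualTensorHom k M M (f ⊗ₜ[k] v) = dualTensorHom k M M (f ⊗ₜ[k] θ v) := by
      ext x; simp [Module.End.mul_apply]
    rw [h2, LinearMap.trace_eq_contract_apply] at h1
    simpa using h1
  exact ⟨hinj, (LinearMap.injective_iff_surjective_of_finrank_eq_finrank
    (by rw [Subspace.dual_finrank_eq])).mp hinj⟩

end AuxTrace




open TensorProduct

namespace Paper

variable (k S : Type*) [Field k] [Ring S] [Algebra k S]

/-- The `k`-linear span of all commutators `x*y - y*x` in `S`; denoted `[S,S]` in the paper. -/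
def commutatorSpan : Submodule k S :=
  Submodule.span k {x : S | ∃ a b : S, x = a * b - b * a}

/-- `S` is (radically) constrained if its Jacobson radical is contained in `[S,S]`. -/
def IsConstrained : Prop :=
  ((⊥ : Ideal S).jacobson : Set S) ⊆ (commutatorSpan k S : Set S)

/-- `S` is split if every endomorphism of a simple left `S`-module is a scalar. -/
def IsSplitAlgebra : Prop :=
  ∀ (L : Type) [AddCommGroup L] [Module S L], IsSimpleModule S L →
    ∀ f : L →ₗ[S] L, ∃ c : k, ∀ x : L, f x = algebraMap k S c • x

/-- A bundled finite-dimensional left `S`-module (with its underlying `k`-structure). -/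
structure FDModule where
  V : Type
  [addCommGroup : AddCommGroup V]
  [modk : Module k V]
  [modS : Module S V]
  [tower : IsScalarTower k S V]
  [scomm : SMulCommClass S k V]
  [fd : FiniteDimensional k V]

attribute [instance] FDModule.addCommGroup FDModule.modk FDModule.modS FDModule.tower
  FDModule.scomm FDModule.fd

variable (M : Type*) [AddCommGroup M] [Module k M] [Module S M] [IsScalarTower k S M]
  [SMulCommClass S k M]

/-- The twisted trace function `χ_θ ∈ S*`, `χ_θ(s) = trace (θ ∘ ρ(s))`, where `ρ` is the
representation of `S` on `M`. -/
noncomputable def twCharOf (θ : M →ₗ[k] M) : Module.Dual k S :=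
  (LinearMap.trace k M).comp
    ((LinearMap.llcomp k M M M θ).comp (Algebra.lsmul k k M).toLinearMap)

variable {k S}

/-- The twisted trace function of a bundled module. -/
noncomputable def twChar (N : FDModule k S) (θ : N.V →ₗ[k] N.V) : Module.Dual k S :=
  twCharOf k S N.V θ

/-- The natural character `χ_V ∈ S*` of a finite-dimensional module. -/
noncomputable def natChar (N : FDModule k S) : Module.Dual k S :=
  twChar N LinearMap.id

variable (k S)

/-- `C₀(S)`: the span of the natural characters of all finite-dimensional `S`-modules. -/
noncomputable def charSpan : Submodule k (Module.Dual k S) :=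
  Submodule.span k (Set.range fun N : FDModule k S => natChar N)

end Paper

namespace Paper

variable (k S : Type*) [Field k] [Ring S] [Algebra k S]

/-- `[R,S]`: the `k`-span of all commutators `r*s - s*r` with `r ∈ R`, `s ∈ S`. -/
def relCommutator (R : Subalgebra k S) : Submodule k S :=
  Submodule.span k {x : S | ∃ r ∈ R, ∃ s : S, x = r * s - s * r}

/-- `C₀(S,R)`: the span of all twisted trace functions `χ_θ` with `θ ∈ End_R(V)`, `V` ranging
over finite-dimensional `S`-modules. -/
noncomputable def relC0 (R : Subalgebra k S) : Submodule k (Module.Dual k S) :=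
  Submodule.span k {f | ∃ (N : FDModule k S) (θ : N.V →ₗ[k] N.V),
    (∀ r ∈ R, ∀ v : N.V, θ (r • v) = r • θ v) ∧ f = twChar N θ}

/-- `R` is a constrained subalgebra of `S` if `C₀(S,R) = C(S,R)`, where
`C(S,R) = {f ∈ S* : f vanishes on [R,S]}`. -/
def IsConstrainedSubalgebra (R : Subalgebra k S) : Prop :=
  relC0 k S R = (relCommutator k S R).dualAnnihilator

end Paper

open Paper in
/-- Proposition 3.5(i): for a subalgebra `R ⊆ S` and a finite-dimensional `S`-module `M`
with representation `ρ`, we have `C(S,R) = C₀(S,R;M)` if and only if every `s ∈ S` with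
`ρ(s) ∈ [R, End_k(M)]` lies in `[R,S]` (injectivity of `H₀(R,S) → H₀(R,End_k(M))`). -/
theorem statement8 (k S : Type) [Field k] [Ring S] [Algebra k S] [FiniteDimensional k S]
    (hsplit : IsSplitAlgebra k S) (R : Subalgebra k S)
    (M : Type) [AddCommGroup M] [Module k M] [Module S M] [IsScalarTower k S M]
    [SMulCommClass S k M] [FiniteDimensional k M] :
    (((relCommutator k S R).dualAnnihilator : Set (Module.Dual k S)) =
        {f | ∃ θ : M →ₗ[k] M, (∀ r ∈ R, ∀ v : M, θ (r • v) = r • θ v) ∧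
          f = twCharOf k S M θ}) ↔
      (∀ s : S, (Algebra.lsmul k k M s : M →ₗ[k] M) ∈
          Submodule.span k {x : M →ₗ[k] M | ∃ r ∈ R, ∃ φ : M →ₗ[k] M,
            x = (Algebra.lsmul k k M (r : S)) ∘ₗ φ - φ ∘ₗ (Algebra.lsmul k k M (r : S))} →
        s ∈ relCommutator k S R) := by

  classical
  set ρ : S →ₗ[k] (M →ₗ[k] M) := (Algebra.lsmul k k M).toLinearMap with hρ
  set W : Submodule k (M →ₗ[k] M) := Submodule.span k {x : M →ₗ[k] M | ∃ r ∈ R, ∃ φ : M →ₗ[k] M,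
      x = (Algebra.lsmul k k M (r : S)) ∘ₗ φ - φ ∘ₗ (Algebra.lsmul k k M (r : S))} with hW
  set T : Submodule k S := relCommutator k S R with hT
  -- basic facts
  have hρ_apply : ∀ (s : S) (v : M), ρ s v = s • v := fun s v => rfl
  have hχ : ∀ θ : M →ₗ[k] M, twCharOf k S M θ = ρ.dualMap (tForm k M θ) := fun θ => rfl
  have hTW : T ≤ W.comap ρ := by
    rw [hT, relCommutator, Submodule.span_le]
    rintro x ⟨r, hr, s, rfl⟩
    rw [SetLike.mem_coe, Submodule.mem_comap]
    have : ρ (r * s - s * r) = (Algebra.lsmul k k M r) ∘ₗ (Algebra.lsmul k k M s)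
        - (Algebra.lsmul k k M s) ∘ₗ (Algebra.lsmul k k M r) := by
      simp only [hρ, AlgHom.toLinearMap_apply, map_sub, map_mul, Module.End.mul_eq_comp]
    rw [this]
    exact Submodule.subset_span ⟨r, hr, Algebra.lsmul k k M s, rfl⟩
  have hAnn : Submodule.map ρ.dualMap W.dualAnnihilator = (W.comap ρ).dualAnnihilator := by
    have h1 : W.dualAnnihilator = LinearMap.range W.mkQ.dualMap := by
      rw [LinearMap.range_dualMap_eq_dualAnnihilator_ker, Submodule.ker_mkQ]
    rw [h1, ← LinearMap.range_comp, LinearMap.dualMap_comp_dualMap,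
      LinearMap.range_dualMap_eq_dualAnnihilator_ker, LinearMap.ker_comp, Submodule.ker_mkQ]
  -- the commuting condition, restated
  have hP : ∀ θ : M →ₗ[k] M, (∀ r ∈ R, ∀ v : M, θ (r • v) = r • θ v) ↔
      (∀ r ∈ R, θ * ρ r = ρ r * θ) := by
    intro θ
    constructor
    · intro h r hr
      ext v
      simpa [Module.End.mul_apply, hρ_apply] using h r hr v
    · intro h r hr v
      have := congrFun (congrArg (fun (g : M →ₗ[k] M) => (g : M → M)) (h r hr)) v
      simpa [Module.End.mul_apply, hρ_apply] using this
  -- set identification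
  have hset : {f | ∃ θ : M →ₗ[k] M, (∀ r ∈ R, ∀ v : M, θ (r • v) = r • θ v) ∧
      f = twCharOf k S M θ} = ((W.comap ρ).dualAnnihilator : Set (Module.Dual k S)) := by
    rw [← hAnn]
    ext f
    simp only [Set.mem_setOf_eq, SetLike.mem_coe, Submodule.mem_map]
    constructor
    · rintro ⟨θ, hθ, rfl⟩
      refine ⟨tForm k M θ, ?_, (hχ θ).symm⟩
      rw [Submodule.mem_dualAnnihilator]
      intro w hw
      rw [← LinearMap.mem_ker]
      revert w hw
      rw [← SetLike.le_def, hW, Submodule.span_le]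
      rintro x ⟨r, hr, φ, rfl⟩
      rw [SetLike.mem_coe, LinearMap.mem_ker, map_sub]
      have hc : θ * ρ r = ρ r * θ := (hP θ).mp hθ r hr
      have e1 : (Algebra.lsmul k k M (r : S)) ∘ₗ φ = ρ r * φ := rfl
      have e2 : φ ∘ₗ (Algebra.lsmul k k M (r : S)) = φ * ρ r := rfl
      rw [e1, e2, tForm_apply, tForm_apply, ← mul_assoc, hc, mul_assoc,
        LinearMap.trace_mul_comm, mul_assoc, ← mul_assoc, sub_self]
    · rintro ⟨g, hg, rfl⟩
      obtain ⟨θ, rfl⟩ := (tForm_bijective k M).2 g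
      refine ⟨θ, (hP θ).mpr ?_, (hχ θ).symm⟩
      intro r hr
      have key : tForm k M (θ * ρ r - ρ r * θ) = 0 := by
        apply LinearMap.ext
        intro φ
        rw [map_sub, LinearMap.sub_apply, LinearMap.zero_apply, tForm_apply, tForm_apply]
        have h3 : LinearMap.trace k M (ρ r * θ * φ) = LinearMap.trace k M (θ * (φ * ρ r)) := by
          rw [mul_assoc, LinearMap.trace_mul_comm, mul_assoc]
        rw [h3, mul_assoc, ← tForm_apply, ← tForm_apply, ← map_sub]
        rw [Submodule.mem_dualAnnihilator] at hg
        apply hg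
        apply Submodule.subset_span
        exact ⟨r, hr, φ, rfl⟩
      have h0 : θ * ρ r - ρ r * θ = 0 :=
        (tForm_bijective k M).1 (key.trans (map_zero (tForm k M)).symm)
      rw [sub_eq_zero] at h0
      exact h0
  rw [hset, SetLike.coe_set_eq]
  constructor
  · intro h s hs
    have heq : T = W.comap ρ := by
      have h2 := congrArg Submodule.dualCoannihilator h
      rwa [Subspace.dualAnnihilator_dualCoannihilator_eq,
        Subspace.dualAnnihilator_dualCoannihilator_eq] at h2
    rw [heq, Submodule.mem_comap]
    exact hs
  · intro h
    congr 1
    refine le_antisymm hTW fun s hs => ?_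
    exact h s (Submodule.mem_comap.mp hs)
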